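/- Let V be a two-dimensional real inner product space and B : V → V a self-adjoint linear operator with eigenvalues a > b. Let v, p ∈ V be nonzero, set κ = μ(v) and assume κ > b, and let β = ∠(v,p). Then μ(p) − b ≥ ( max{ √(κ − b)·cos β − √(a − κ)·sin β, 0 } )²; equivalently κ − μ(p) ≤ (κ − b) − ( max{ √(κ − b)·cos β − √(a − κ)·sin β, 0 } )². -/

import Mathlib

open InnerProductGeometry Real RealInnerProductSpace

/-- The Rayleigh quotient `μ(v) = ⟨Bv,v⟩/⟨v,v⟩` of a linear operator `B`. -/
noncomputable def rayQuot {V : Type*} [NormedAddCommGroup V] [InnerProductSpace ℝ V]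
    (B : V →ₗ[ℝ] V) (v : V) : ℝ :=
  ⟪B v, v⟫ / ⟪v, v⟫

/-- The normalized residual `ϱ(v) = ‖Bv − μ(v)v‖/‖v‖`. -/
noncomputable def resQuot {V : Type*} [NormedAddCommGroup V] [InnerProductSpace ℝ V]
    (B : V →ₗ[ℝ] V) (v : V) : ℝ :=
  ‖B v - rayQuot B v • v‖ / ‖v‖

private lemma key_ineq (v1 v2 p1 p2 : ℝ) :
    |v1| * (v1 * p1 + v2 * p2) - |v2| * |v1 * p2 - v2 * p1| ≤ |p1| * (v1 ^ 2 + v2 ^ 2) := by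
  have h1 : |v1| * (v1 * p1) ≤ v1 ^ 2 * |p1| := by
    calc |v1| * (v1 * p1) ≤ |v1| * |v1 * p1| :=
          mul_le_mul_of_nonneg_left (le_abs_self _) (abs_nonneg _)
    _ = v1 ^ 2 * |p1| := by rw [abs_mul, ← sq_abs v1]; ring
  have h2 : |v1 * p2| ≤ |v1 * p2 - v2 * p1| + |v2 * p1| := by
    have := abs_sub_abs_le_abs_sub (v1 * p2) (v2 * p1)
    linarith
  have h3 : |v1| * (v2 * p2) ≤ |v2| * (|v1 * p2 - v2 * p1| + |v2 * p1|) := by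
    calc |v1| * (v2 * p2) ≤ |v1| * |v2 * p2| :=
          mul_le_mul_of_nonneg_left (le_abs_self _) (abs_nonneg _)
    _ = |v2| * |v1 * p2| := by rw [abs_mul, abs_mul]; ring
    _ ≤ |v2| * (|v1 * p2 - v2 * p1| + |v2 * p1|) :=
        mul_le_mul_of_nonneg_left h2 (abs_nonneg _)
  have h4 : |v2| * |v2 * p1| = v2 ^ 2 * |p1| := by
    rw [abs_mul, ← sq_abs v2]; ring
  nlinarith [abs_nonneg v2, abs_nonneg p1]

theorem rayleigh_two_dim_angle_bound
    {V : Type*} [NormedAddCommGroup V] [InnerProductSpace ℝ V] [FiniteDimensional ℝ V]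
    (hdim : Module.finrank ℝ V = 2)
    (B : V →ₗ[ℝ] V) (hB : LinearMap.IsSymmetric B)
    (a b : ℝ) (hab : a > b)
    (e₁ e₂ : V) (he₁ : ‖e₁‖ = 1) (he₂ : ‖e₂‖ = 1) (he₁₂ : ⟪e₁, e₂⟫ = 0)
    (hBe₁ : B e₁ = a • e₁) (hBe₂ : B e₂ = b • e₂)
    (v p : V) (hv : v ≠ 0) (hp : p ≠ 0)
    (hκ : rayQuot B v > b) :
    rayQuot B p - b ≥
      (max (Real.sqrt (rayQuot B v - b) * Real.cos (InnerProductGeometry.angle v p) -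
        Real.sqrt (a - rayQuot B v) * Real.sin (InnerProductGeometry.angle v p)) 0) ^ 2 ∧
    rayQuot B v - rayQuot B p ≤
      (rayQuot B v - b) -
        (max (Real.sqrt (rayQuot B v - b) * Real.cos (InnerProductGeometry.angle v p) -
          Real.sqrt (a - rayQuot B v) * Real.sin (InnerProductGeometry.angle v p)) 0) ^ 2 := by
  -- inner product facts
  have h11 : ⟪e₁, e₁⟫ = (1 : ℝ) := by
    rw [real_inner_self_eq_norm_sq, he₁]; norm_num
  have h22 : ⟪e₂, e₂⟫ = (1 : ℝ) := by
    rw [real_inner_self_eq_norm_sq, he₂]; norm_num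
  have h21 : ⟪e₂, e₁⟫ = (0 : ℝ) := by rw [real_inner_comm]; exact he₁₂
  -- orthonormality and spanning
  have horth : Orthonormal ℝ ![e₁, e₂] := by
    rw [orthonormal_iff_ite]
    intro i j
    fin_cases i <;> fin_cases j <;>
      simp [h11, h22, h21, he₁₂, he₁, he₂]
  have hli := horth.linearIndependent
  have hcard : Fintype.card (Fin 2) = Module.finrank ℝ V := by simp [hdim]
  set bas := basisOfLinearIndependentOfCardEqFinrank hli hcard with hbas
  have hsp : ∀ w : V, ∃ c d : ℝ, c • e₁ + d • e₂ = w := by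
    intro w
    have h1 : w ∈ Submodule.span ℝ (Set.range ⇑bas) := by
      rw [bas.span_eq]; trivial
    rw [hbas, coe_basisOfLinearIndependentOfCardEqFinrank] at h1
    have h2 : Set.range ![e₁, e₂] = {e₁, e₂} := by
      simp only [Matrix.range_cons, Matrix.range_empty, Set.union_singleton,
        Set.union_empty]
      exact Set.pair_comm e₂ e₁
    rw [h2, Submodule.mem_span_pair] at h1
    obtain ⟨c, d, hcd⟩ := h1
    exact ⟨c, d, hcd⟩
  obtain ⟨v1, v2, hvd⟩ := hsp v
  obtain ⟨p1, p2, hpd⟩ := hsp p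
  -- norms and inner products in coordinates
  have hvv : ⟪v, v⟫ = v1 ^ 2 + v2 ^ 2 := by
    rw [← hvd]
    simp only [inner_add_left, inner_add_right, real_inner_smul_left, real_inner_smul_right,
      h11, h22, h21, he₁₂]
    ring
  have hpp : ⟪p, p⟫ = p1 ^ 2 + p2 ^ 2 := by
    rw [← hpd]
    simp only [inner_add_left, inner_add_right, real_inner_smul_left, real_inner_smul_right,
      h11, h22, h21, he₁₂]
    ring
  have hvp : ⟪v, p⟫ = v1 * p1 + v2 * p2 := by
    rw [← hvd, ← hpd]
    simp [inner_add_left, inner_add_right, inner_smul_left, inner_smul_right,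
      h11, h22, h21, he₁₂, he₁, he₂]
    ring
  have hBvv : ⟪B v, v⟫ = a * v1 ^ 2 + b * v2 ^ 2 := by
    rw [← hvd]
    simp [map_add, map_smul, hBe₁, hBe₂, inner_add_left, inner_add_right,
      inner_smul_left, inner_smul_right, h11, h22, h21, he₁₂, he₁, he₂]
    ring
  have hBpp : ⟪B p, p⟫ = a * p1 ^ 2 + b * p2 ^ 2 := by
    rw [← hpd]
    simp [map_add, map_smul, hBe₁, hBe₂, inner_add_left, inner_add_right,
      inner_smul_left, inner_smul_right, h11, h22, h21, he₁₂, he₁, he₂]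
    ring
  have hnv : ‖v‖ ^ 2 = v1 ^ 2 + v2 ^ 2 := by rw [← real_inner_self_eq_norm_sq]; exact hvv
  have hnp : ‖p‖ ^ 2 = p1 ^ 2 + p2 ^ 2 := by rw [← real_inner_self_eq_norm_sq]; exact hpp
  have hnv0 : (0 : ℝ) < ‖v‖ := norm_pos_iff.mpr hv
  have hnp0 : (0 : ℝ) < ‖p‖ := norm_pos_iff.mpr hp
  have hnv2 : (0 : ℝ) < v1 ^ 2 + v2 ^ 2 := by rw [← hnv]; positivity
  have hnp2 : (0 : ℝ) < p1 ^ 2 + p2 ^ 2 := by rw [← hnp]; positivity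
  have hab' : (0 : ℝ) < a - b := sub_pos.mpr hab
  -- Rayleigh quotients in coordinates
  have hκv : rayQuot B v = (a * v1 ^ 2 + b * v2 ^ 2) / (v1 ^ 2 + v2 ^ 2) := by
    rw [rayQuot, hBvv, hvv]
  have hκp : rayQuot B p = (a * p1 ^ 2 + b * p2 ^ 2) / (p1 ^ 2 + p2 ^ 2) := by
    rw [rayQuot, hBpp, hpp]
  have hκb : rayQuot B v - b = (a - b) * v1 ^ 2 / (v1 ^ 2 + v2 ^ 2) := by
    rw [hκv]; field_simp; ring
  have haκ : a - rayQuot B v = (a - b) * v2 ^ 2 / (v1 ^ 2 + v2 ^ 2) := by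
    rw [hκv]; field_simp; ring
  have hμpb : rayQuot B p - b = (Real.sqrt (a - b) * |p1| / ‖p‖) ^ 2 := by
    rw [hκp]
    rw [div_pow, mul_pow, sq_abs, Real.sq_sqrt hab'.le, hnp]
    field_simp
    ring
  -- square roots
  have hsq1 : Real.sqrt (rayQuot B v - b) = Real.sqrt (a - b) * |v1| / ‖v‖ := by
    have : rayQuot B v - b = (Real.sqrt (a - b) * |v1| / ‖v‖) ^ 2 := by
      rw [hκb, div_pow, mul_pow, sq_abs, Real.sq_sqrt hab'.le, hnv]
    rw [this, Real.sqrt_sq (by positivity)]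
  have hsq2 : Real.sqrt (a - rayQuot B v) = Real.sqrt (a - b) * |v2| / ‖v‖ := by
    have : a - rayQuot B v = (Real.sqrt (a - b) * |v2| / ‖v‖) ^ 2 := by
      rw [haκ, div_pow, mul_pow, sq_abs, Real.sq_sqrt hab'.le, hnv]
    rw [this, Real.sqrt_sq (by positivity)]
  -- cos and sin of the angle
  have hcos : Real.cos (InnerProductGeometry.angle v p) = (v1 * p1 + v2 * p2) / (‖v‖ * ‖p‖) := by
    rw [InnerProductGeometry.cos_angle, hvp]
  have hsin : Real.sin (InnerProductGeometry.angle v p) = |v1 * p2 - v2 * p1| / (‖v‖ * ‖p‖) := by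
    have h1 := InnerProductGeometry.sin_angle_mul_norm_mul_norm v p
    rw [hvv, hpp, hvp] at h1
    have h2 : (v1 ^ 2 + v2 ^ 2) * (p1 ^ 2 + p2 ^ 2) - (v1 * p1 + v2 * p2) * (v1 * p1 + v2 * p2)
        = (v1 * p2 - v2 * p1) ^ 2 := by ring
    rw [h2, Real.sqrt_sq_eq_abs] at h1
    field_simp at h1 ⊢
    linarith [h1]
  -- the main bound
  set X := Real.sqrt (rayQuot B v - b) * Real.cos (InnerProductGeometry.angle v p) -
    Real.sqrt (a - rayQuot B v) * Real.sin (InnerProductGeometry.angle v p) with hX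
  have hXval : X = Real.sqrt (a - b) *
      (|v1| * (v1 * p1 + v2 * p2) - |v2| * |v1 * p2 - v2 * p1|) / ((v1 ^ 2 + v2 ^ 2) * ‖p‖) := by
    rw [hX, hsq1, hsq2, hcos, hsin, ← hnv]
    field_simp
  have hXle : X ≤ Real.sqrt (a - b) * |p1| / ‖p‖ := by
    rw [hXval]
    have hkey := key_ineq v1 v2 p1 p2
    rw [div_le_div_iff₀ (by positivity) hnp0]
    have hsab : (0 : ℝ) ≤ Real.sqrt (a - b) := Real.sqrt_nonneg _
    calc Real.sqrt (a - b) * (|v1| * (v1 * p1 + v2 * p2) - |v2| * |v1 * p2 - v2 * p1|) * ‖p‖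
        ≤ Real.sqrt (a - b) * (|p1| * (v1 ^ 2 + v2 ^ 2)) * ‖p‖ := by
          apply mul_le_mul_of_nonneg_right _ hnp0.le
          exact mul_le_mul_of_nonneg_left hkey hsab
    _ = Real.sqrt (a - b) * |p1| * ((v1 ^ 2 + v2 ^ 2) * ‖p‖) := by ring
  have hmax : max X 0 ≤ Real.sqrt (a - b) * |p1| / ‖p‖ :=
    max_le hXle (by positivity)
  have hgoal1 : (max X 0) ^ 2 ≤ rayQuot B p - b := by
    rw [hμpb]
    exact pow_le_pow_left₀ (le_max_right X 0) hmax 2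
  exact ⟨hgoal1, by linarith⟩
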